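/- (Drift condition) Let a ∈ (0,1), γ ∈ (0,1), Z be a random element of C(S²,(0,∞)) with ‖Z^γ‖_∞ distributed as Y^γ ‖f^γ‖_∞ for Y standard Fréchet and f a fixed bounded positive continuous function. Define, for h ∈ C(S²,(0,∞)), L(h) = ‖h^γ‖_∞ and (P L)(h) = E[ L( max{ a h∘R, (1−a) Z } ) ] where R is a fixed rotation of S². Then (P L)(h) ≤ β L(h) + K with β = a^γ ∈ (0,1) and K = (1−a)^γ ‖f^γ‖_∞ Γ(1−γ). -/

import Mathlib

open MeasureTheory Real

noncomputable abbrev E3 := EuclideanSpace ℝ (Fin 3)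
noncomputable abbrev Sph := Metric.sphere (0 : E3) 1

open Set Filter

lemma core_integrable {γ : ℝ} (hγ0 : 0 < γ) (hγ1 : γ < 1) :
    IntegrableOn (fun u : ℝ => (1 - Real.exp (-u)) * u ^ (-γ - 1)) (Ioi 0) := by
  have hsplit : Ioi (0:ℝ) = Ioc 0 1 ∪ Ioi 1 := by
    rw [Ioc_union_Ioi_eq_Ioi]; norm_num
  have hcont : ContinuousOn (fun u : ℝ => (1 - Real.exp (-u)) * u ^ (-γ - 1)) (Ioi 0) := by
    apply ContinuousOn.mul
    · exact (continuousOn_const.sub (Real.continuous_exp.comp continuous_neg).continuousOn)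
    · exact fun x hx => (Real.continuousAt_rpow_const x _ (Or.inl (ne_of_gt hx))).continuousWithinAt
  rw [hsplit]
  apply IntegrableOn.union
  · -- bound by u ^ (-γ) on Ioc 0 1
    have hint : IntegrableOn (fun u : ℝ => u ^ (-γ)) (Ioc 0 1) := by
      rw [integrableOn_Ioc_iff_integrableOn_Ioo]
      exact (intervalIntegral.integrableOn_Ioo_rpow_iff one_pos).mpr (by linarith)
    refine Integrable.mono' hint ((hcont.mono ?_).aestronglyMeasurable measurableSet_Ioc) ?_
    · exact Ioc_subset_Ioi_self
    · filter_upwards [ae_restrict_mem measurableSet_Ioc] with u hu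
      have hu0 : 0 < u := hu.1
      have h1 : 0 ≤ 1 - Real.exp (-u) := by
        have := Real.exp_le_one_iff.mpr (by linarith : -u ≤ 0)
        linarith
      have h2 : 1 - Real.exp (-u) ≤ u := by
        have := Real.add_one_le_exp (-u)
        linarith
      rw [Real.norm_eq_abs, abs_of_nonneg (mul_nonneg h1 (Real.rpow_nonneg hu0.le _))]
      calc (1 - Real.exp (-u)) * u ^ (-γ - 1) ≤ u * u ^ (-γ - 1) := by
            exact mul_le_mul_of_nonneg_right h2 (Real.rpow_nonneg hu0.le _)
        _ = u ^ (-γ) := by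
            rw [mul_comm, ← Real.rpow_add_one hu0.ne' (-γ - 1)]; norm_num
  · -- bound by u ^ (-γ - 1) on Ioi 1
    have hint : IntegrableOn (fun u : ℝ => u ^ (-γ - 1)) (Ioi 1) :=
      integrableOn_Ioi_rpow_of_lt (by linarith) one_pos
    refine Integrable.mono' hint ((hcont.mono (Ioi_subset_Ioi one_pos.le)).aestronglyMeasurable
      measurableSet_Ioi) ?_
    filter_upwards [ae_restrict_mem measurableSet_Ioi] with u hu
    have hu0 : (0:ℝ) < u := lt_trans one_pos hu
    have h1 : 0 ≤ 1 - Real.exp (-u) := by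
      have := Real.exp_le_one_iff.mpr (by linarith : -u ≤ 0)
      linarith
    rw [Real.norm_eq_abs, abs_of_nonneg (mul_nonneg h1 (Real.rpow_nonneg hu0.le _))]
    have h2 : 1 - Real.exp (-u) ≤ 1 := by have := Real.exp_pos (-u); linarith
    calc (1 - Real.exp (-u)) * u ^ (-γ - 1) ≤ 1 * u ^ (-γ - 1) :=
          mul_le_mul_of_nonneg_right h2 (Real.rpow_nonneg hu0.le _)
      _ = u ^ (-γ - 1) := one_mul _

lemma core_integral {γ : ℝ} (hγ0 : 0 < γ) (hγ1 : γ < 1) :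
    ∫ u in Ioi (0:ℝ), γ * ((1 - Real.exp (-u)) * u ^ (-γ - 1)) = Real.Gamma (1 - γ) := by
  set F : ℝ → ℝ := fun u => if u ≤ 0 then 0 else (Real.exp (-u) - 1) * u ^ (-γ) with hF
  set F' : ℝ → ℝ := fun u => γ * ((1 - Real.exp (-u)) * u ^ (-γ - 1)) - Real.exp (-u) * u ^ (-γ)
    with hF'
  have hgamma : IntegrableOn (fun u : ℝ => Real.exp (-u) * u ^ (-γ)) (Ioi 0) := by
    have := Real.GammaIntegral_convergent (by linarith : 0 < 1 - γ)
    simpa using this.congr_fun (fun x hx => by norm_num) measurableSet_Ioi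
  have hF'int : IntegrableOn F' (Ioi 0) :=
    ((core_integrable hγ0 hγ1).const_mul γ).sub hgamma
  have hderiv : ∀ x ∈ Ioi (0:ℝ), HasDerivAt F (F' x) x := by
    intro x hx
    have hx0 : (0:ℝ) < x := hx
    have hG : HasDerivAt (fun u : ℝ => (Real.exp (-u) - 1) * u ^ (-γ))
        ((-Real.exp (-x)) * x ^ (-γ) + (Real.exp (-x) - 1) * (-γ * x ^ (-γ - 1))) x := by
      have h1 : HasDerivAt (fun u : ℝ => Real.exp (-u) - 1) (-Real.exp (-x)) x := by
        have := (Real.hasDerivAt_exp (-x)).comp x (hasDerivAt_neg x)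
        simpa [mul_comm] using this.sub_const 1
      have h2 : HasDerivAt (fun u : ℝ => u ^ (-γ)) (-γ * x ^ (-γ - 1)) x :=
        Real.hasDerivAt_rpow_const (Or.inl hx0.ne')
      exact h1.mul h2
    have heq : F =ᶠ[nhds x] (fun u : ℝ => (Real.exp (-u) - 1) * u ^ (-γ)) := by
      filter_upwards [Ioi_mem_nhds hx0] with u hu
      simp [hF, not_le.mpr (mem_Ioi.mp hu)]
    have := hG.congr_of_eventuallyEq heq
    refine this.congr_deriv ?_
    simp only [hF']
    ring
  have hcont : ContinuousWithinAt F (Ici 0) 0 := by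
    have h0 : F 0 = 0 := by simp [hF]
    rw [ContinuousWithinAt, h0]
    apply squeeze_zero_norm' (a := fun u : ℝ => u ^ (1 - γ))
    · filter_upwards [self_mem_nhdsWithin] with u (hu : u ∈ Ici (0:ℝ))
      rcases eq_or_lt_of_le (mem_Ici.mp hu) with h | h
      · simp [hF, ← h, Real.zero_rpow (by linarith : 1 - γ ≠ 0)]
      · have h1 : 0 ≤ 1 - Real.exp (-u) := by
          have := Real.exp_le_one_iff.mpr (by linarith : -u ≤ 0)
          linarith
        have h2 : 1 - Real.exp (-u) ≤ u := by
          have := Real.add_one_le_exp (-u)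
          linarith
        simp only [hF]; rw [if_neg (not_le.mpr h)]
        rw [Real.norm_eq_abs, abs_mul, abs_of_nonpos (by linarith), abs_of_nonneg (Real.rpow_nonneg h.le _), neg_sub]
        calc (1 - Real.exp (-u)) * u ^ (-γ) ≤ u * u ^ (-γ) :=
              mul_le_mul_of_nonneg_right h2 (Real.rpow_nonneg h.le _)
          _ = u ^ (1 - γ) := by rw [mul_comm, ← Real.rpow_add_one h.ne' (-γ)]; congr 1; ring
    · have : ContinuousAt (fun u : ℝ => u ^ (1 - γ)) 0 :=
        Real.continuousAt_rpow_const 0 _ (Or.inr (by linarith))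
      have h := this.continuousWithinAt (s := Ici (0:ℝ))
      rw [ContinuousWithinAt] at h
      simpa [Real.zero_rpow (by linarith : 1 - γ ≠ 0)] using h
  have htop : Tendsto F atTop (nhds 0) := by
    apply squeeze_zero_norm' (a := fun u : ℝ => u ^ (-γ))
    · filter_upwards [eventually_gt_atTop 0] with u hu
      have h1 : 0 ≤ 1 - Real.exp (-u) := by
        have := Real.exp_le_one_iff.mpr (by linarith : -u ≤ 0)
        linarith
      simp only [hF]; rw [if_neg (not_le.mpr hu)]
      rw [Real.norm_eq_abs, abs_mul, abs_of_nonpos (by linarith), abs_of_nonneg (Real.rpow_nonneg hu.le _), neg_sub]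
      calc (1 - Real.exp (-u)) * u ^ (-γ) ≤ 1 * u ^ (-γ) :=
            mul_le_mul_of_nonneg_right (by have := Real.exp_pos (-u); linarith) (Real.rpow_nonneg hu.le _)
        _ = u ^ (-γ) := one_mul _
    · exact tendsto_rpow_neg_atTop hγ0
  have hFTC : ∫ x in Ioi (0:ℝ), F' x = 0 - F 0 :=
    integral_Ioi_of_hasDerivAt_of_tendsto hcont hderiv hF'int htop
  have hF0 : F 0 = 0 := by simp [hF]
  have key : ∫ u in Ioi (0:ℝ), γ * ((1 - Real.exp (-u)) * u ^ (-γ - 1))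
      = (∫ u in Ioi (0:ℝ), F' u) + ∫ u in Ioi (0:ℝ), Real.exp (-u) * u ^ (-γ) := by
    rw [← integral_add hF'int hgamma]
    apply setIntegral_congr_fun measurableSet_Ioi
    intro u _
    simp only [hF']
    ring
  rw [key, hFTC, hF0, Real.Gamma_eq_integral (by linarith : 0 < 1 - γ)]
  norm_num

lemma phi_integrable {γ M : ℝ} (hγ0 : 0 < γ) (hγ1 : γ < 1) (hM : 0 < M) :
    IntegrableOn (fun t : ℝ => 1 - Real.exp (-(M / t) ^ (1/γ))) (Ioi 0) := by
  have hsplit : Ioi (0:ℝ) = Ioc 0 1 ∪ Ioi 1 := by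
    rw [Ioc_union_Ioi_eq_Ioi]; norm_num
  have hcont : ContinuousOn (fun t : ℝ => 1 - Real.exp (-(M / t) ^ (1/γ))) (Ioi 0) := by
    apply continuousOn_const.sub
    apply (Real.continuous_exp.comp continuous_neg).comp_continuousOn
    apply ContinuousOn.rpow_const
    · exact continuousOn_const.div continuousOn_id (fun t ht => ne_of_gt ht)
    · exact fun t ht => Or.inl (ne_of_gt (div_pos hM ht))
  have hbd : ∀ t : ℝ, 0 < t → 0 ≤ 1 - Real.exp (-(M / t) ^ (1/γ)) ∧
      1 - Real.exp (-(M / t) ^ (1/γ)) ≤ (M / t) ^ (1/γ) := by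
    intro t ht
    have hpos : (0:ℝ) ≤ (M / t) ^ (1/γ) := Real.rpow_nonneg (div_pos hM ht).le _
    constructor
    · have := Real.exp_le_one_iff.mpr (by linarith : -(M / t) ^ (1/γ) ≤ 0)
      linarith
    · have := Real.add_one_le_exp (-(M / t) ^ (1/γ))
      linarith
  rw [hsplit]
  apply IntegrableOn.union
  · refine Integrable.mono' (integrableOn_const (C := (1:ℝ)) measure_Ioc_lt_top.ne)
      ((hcont.mono Ioc_subset_Ioi_self).aestronglyMeasurable measurableSet_Ioc) ?_
    filter_upwards [ae_restrict_mem measurableSet_Ioc] with t ht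
    obtain ⟨hb0, _⟩ := hbd t ht.1
    rw [Real.norm_eq_abs, abs_of_nonneg hb0]
    have := Real.exp_pos (-(M / t) ^ (1/γ))
    linarith
  · refine Integrable.mono' ((integrableOn_Ioi_rpow_of_lt
      (show -(1/γ) < -1 by rw [neg_lt_neg_iff]; exact (one_lt_div hγ0).mpr hγ1) one_pos).const_mul
      (M ^ (1/γ))) ((hcont.mono (Ioi_subset_Ioi one_pos.le)).aestronglyMeasurable
      measurableSet_Ioi) ?_
    filter_upwards [ae_restrict_mem measurableSet_Ioi] with t ht
    have ht0 : (0:ℝ) < t := lt_trans one_pos ht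
    obtain ⟨hb0, hb1⟩ := hbd t ht0
    rw [Real.norm_eq_abs, abs_of_nonneg hb0]
    calc 1 - Real.exp (-(M / t) ^ (1/γ)) ≤ (M / t) ^ (1/γ) := hb1
      _ = M ^ (1/γ) * t ^ (-(1/γ)) := by
        rw [div_eq_mul_inv, Real.mul_rpow hM.le (inv_nonneg.mpr ht0.le),
          Real.inv_rpow ht0.le, ← Real.rpow_neg ht0.le]

lemma phi_integral {γ M : ℝ} (hγ0 : 0 < γ) (hγ1 : γ < 1) (hM : 0 < M) :
    ∫ t in Ioi (0:ℝ), (1 - Real.exp (-(M / t) ^ (1/γ))) = M * Real.Gamma (1 - γ) := by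
  have hγ : γ ≠ 0 := ne_of_gt hγ0
  have step1 : ∫ t in Ioi (0:ℝ), (1 - Real.exp (-(M / t) ^ (1/γ)))
      = M * ∫ x in Ioi (0:ℝ), (1 - Real.exp (-x ^ (-(1/γ)))) := by
    have h := integral_comp_mul_left_Ioi (fun t : ℝ => 1 - Real.exp (-(M / t) ^ (1/γ))) 0 hM
    rw [mul_zero] at h
    have h2 : ∫ x in Ioi (0:ℝ), (fun t : ℝ => 1 - Real.exp (-(M / t) ^ (1/γ))) (M * x)
        = ∫ x in Ioi (0:ℝ), (1 - Real.exp (-x ^ (-(1/γ)))) := by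
      apply setIntegral_congr_fun measurableSet_Ioi
      intro x hx
      have hx0 : (0:ℝ) < x := hx
      simp only
      rw [show M / (M * x) = x⁻¹ by field_simp, Real.inv_rpow hx0.le, ← Real.rpow_neg hx0.le]
    rw [h2] at h
    rw [smul_eq_mul] at h
    field_simp at h ⊢
    linarith [h]
  have step2 : ∫ x in Ioi (0:ℝ), (1 - Real.exp (-x ^ (-(1/γ)))) = Real.Gamma (1 - γ) := by
    have h := integral_comp_rpow_Ioi (fun y : ℝ => 1 - Real.exp (-y ^ (-(1/γ))))
      (show -γ ≠ 0 by simpa using hγ)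
    rw [← h]
    rw [← core_integral hγ0 hγ1]
    apply setIntegral_congr_fun measurableSet_Ioi
    intro x hx
    have hx0 : (0:ℝ) < x := hx
    simp only [smul_eq_mul]
    rw [← Real.rpow_mul hx0.le, show -γ * -(1/γ) = 1 by field_simp, Real.rpow_one,
      abs_of_nonpos (by linarith : -γ ≤ 0), neg_neg]
    ring
  rw [step1, step2]

/-- Drift condition: for `a, γ ∈ (0,1)`, `Z` a random continuous positive field on `S²`
such that `‖Z^γ‖_∞` is distributed as `Y^γ ‖f^γ‖_∞` with `Y` standard Fréchet and `f` a fixed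
positive continuous function, and `L(h) = ‖h^γ‖_∞`, one has
`(𝒫L)(h) = E[L(max{a h∘R, (1−a) Z})] ≤ a^γ L(h) + (1−a)^γ ‖f^γ‖_∞ Γ(1−γ)`. -/
theorem drift_condition (Ω : Type*) [MeasurableSpace Ω] (P : Measure Ω)
    [IsProbabilityMeasure P] (a γ : ℝ) (ha : a ∈ Set.Ioo (0 : ℝ) 1)
    (hγ : γ ∈ Set.Ioo (0 : ℝ) 1)
    (f : Sph → ℝ) (hf : Continuous f) (hfpos : ∀ x, 0 < f x)
    (Z : Ω → Sph → ℝ) (hZc : ∀ ω, Continuous (Z ω)) (hZpos : ∀ ω x, 0 < Z ω x)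
    (hZdist : ∀ y : ℝ, 0 < y →
      P {ω | (⨆ x : Sph, Z ω x ^ γ) ≤ y}
        = ENNReal.ofReal (Real.exp (-((⨆ x : Sph, f x ^ γ) / y) ^ (1 / γ))))
    (R : Sph ≃ Sph) (h : Sph → ℝ) (hh : Continuous h) (hhpos : ∀ x, 0 < h x) :
    ∫ ω, (⨆ x : Sph, max (a * h (R x)) ((1 - a) * Z ω x) ^ γ) ∂P
      ≤ a ^ γ * (⨆ x : Sph, h x ^ γ)
        + (1 - a) ^ γ * (⨆ x : Sph, f x ^ γ) * Real.Gamma (1 - γ) := by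
  obtain ⟨ha0, ha1⟩ := ha
  obtain ⟨hγ0, hγ1⟩ := hγ
  have hc0 : (0:ℝ) < 1 - a := by linarith
  have hne : Nonempty Sph := (NormedSpace.sphere_nonempty.mpr zero_le_one).to_subtype
  have hbdd : ∀ u : Sph → ℝ, Continuous u → BddAbove (Set.range fun x : Sph => u x ^ γ) :=
    fun u hu => (isCompact_range (hu.rpow_const fun x => Or.inr hγ0.le)).bddAbove
  set H := ⨆ x : Sph, h x ^ γ with hH
  set Cf := ⨆ x : Sph, f x ^ γ with hCf
  set c := (1 - a) ^ γ with hc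
  set W : Ω → ℝ := fun ω => ⨆ x : Sph, Z ω x ^ γ with hWdef
  set K := a ^ γ * H with hK
  set M := c * Cf with hMdef
  set g : Ω → ℝ := fun ω => ⨆ x : Sph, max (a * h (R x)) ((1 - a) * Z ω x) ^ γ with hgdef
  have hcpos : (0:ℝ) < c := Real.rpow_pos_of_pos hc0 γ
  have haγ : (0:ℝ) < a ^ γ := Real.rpow_pos_of_pos ha0 γ
  have hHpos : 0 < H := by
    obtain ⟨x₀⟩ := hne
    exact lt_of_lt_of_le (Real.rpow_pos_of_pos (hhpos x₀) γ) (le_ciSup (hbdd h hh) x₀)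
  have hCfpos : 0 < Cf := by
    obtain ⟨x₀⟩ := hne
    exact lt_of_lt_of_le (Real.rpow_pos_of_pos (hfpos x₀) γ) (le_ciSup (hbdd f hf) x₀)
  have hKpos : 0 < K := mul_pos haγ hHpos
  have hMpos : 0 < M := mul_pos hcpos hCfpos
  have hΓpos : 0 < Real.Gamma (1 - γ) := Real.Gamma_pos_of_pos (by linarith)
  -- sup of max equals max of sups
  have hsupmax : ∀ p q : Sph → ℝ, BddAbove (Set.range p) → BddAbove (Set.range q) →
      (⨆ x : Sph, max (p x) (q x)) = max (⨆ x : Sph, p x) (⨆ x : Sph, q x) := by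
    intro p q hp hq
    apply le_antisymm
    · exact ciSup_le fun x => max_le_max (le_ciSup hp x) (le_ciSup hq x)
    · obtain ⟨bp, hbp⟩ := hp
      obtain ⟨bq, hbq⟩ := hq
      have hb : BddAbove (Set.range fun x : Sph => max (p x) (q x)) := by
        refine ⟨max bp bq, ?_⟩
        rintro r ⟨x, rfl⟩
        exact max_le_max (hbp (Set.mem_range_self x)) (hbq (Set.mem_range_self x))
      exact max_le (ciSup_mono hb fun x => le_max_left _ _)
        (ciSup_mono hb fun x => le_max_right _ _)
  -- the integrand equals max K (c * W ω)
  have hgeq : ∀ ω, g ω = max K (c * W ω) := by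
    intro ω
    have e1 : ∀ x : Sph, max (a * h (R x)) ((1 - a) * Z ω x) ^ γ
        = max (a ^ γ * h (R x) ^ γ) (c * Z ω x ^ γ) := by
      intro x
      have h1 : (a * h (R x)) ^ γ = a ^ γ * h (R x) ^ γ :=
        Real.mul_rpow ha0.le (hhpos _).le
      have h2 : ((1 - a) * Z ω x) ^ γ = c * Z ω x ^ γ :=
        Real.mul_rpow hc0.le (hZpos ω x).le
      rcases le_total (a * h (R x)) ((1 - a) * Z ω x) with hle | hle
      · rw [max_eq_right hle, h2, max_eq_right]
        rw [← h1, ← h2]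
        exact Real.rpow_le_rpow (mul_nonneg ha0.le (hhpos _).le) hle hγ0.le
      · rw [max_eq_left hle, h1, max_eq_left]
        rw [← h1, ← h2]
        exact Real.rpow_le_rpow (mul_nonneg hc0.le (hZpos ω x).le) hle hγ0.le
    have hb1 : BddAbove (Set.range fun x : Sph => a ^ γ * h (R x) ^ γ) := by
      rw [show (fun x : Sph => a ^ γ * h (R x) ^ γ)
          = (fun y : Sph => a ^ γ * h y ^ γ) ∘ R from rfl, R.surjective.range_comp]
      exact (isCompact_range (continuous_const.mul
        (hh.rpow_const fun x => Or.inr hγ0.le))).bddAbove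
    have hb2 : BddAbove (Set.range fun x : Sph => c * Z ω x ^ γ) :=
      (isCompact_range (continuous_const.mul
        ((hZc ω).rpow_const fun x => Or.inr hγ0.le))).bddAbove
    calc g ω = ⨆ x : Sph, max (a ^ γ * h (R x) ^ γ) (c * Z ω x ^ γ) := iSup_congr e1
      _ = max (⨆ x : Sph, a ^ γ * h (R x) ^ γ) (⨆ x : Sph, c * Z ω x ^ γ) :=
          hsupmax _ _ hb1 hb2
      _ = max K (c * W ω) := by
          congr 1
          · rw [R.surjective.iSup_comp (g := fun y : Sph => a ^ γ * h y ^ γ), hK]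
            exact ((Monotone.map_ciSup_of_continuousAt
              (continuousAt_const.mul continuousAt_id)
              (monotone_mul_left_of_nonneg haγ.le) (hbdd h hh))).symm
          · exact ((Monotone.map_ciSup_of_continuousAt
              (continuousAt_const.mul continuousAt_id)
              (monotone_mul_left_of_nonneg hcpos.le) (hbdd (Z ω) (hZc ω)))).symm
  have hgpos : ∀ ω, 0 ≤ g ω := fun ω => (hgeq ω) ▸ le_trans hKpos.le (le_max_left _ _)
  by_cases hgi : Integrable g P
  swap
  · rw [integral_undef hgi]
    have : 0 ≤ M * Real.Gamma (1 - γ) := le_of_lt (mul_pos hMpos hΓpos)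
    nlinarith [hKpos]
  -- layer cake
  rw [hgi.integral_eq_integral_meas_lt (Eventually.of_forall hgpos)]
  set φ : ℝ → ℝ := fun t => 1 - Real.exp (-(M / t) ^ (1/γ)) with hφdef
  have hφ0 : ∀ t : ℝ, 0 < t → 0 ≤ φ t := by
    intro t ht
    have hpos : (0:ℝ) ≤ (M / t) ^ (1/γ) := Real.rpow_nonneg (div_pos hMpos ht).le _
    have := Real.exp_le_one_iff.mpr (by linarith : -(M / t) ^ (1/γ) ≤ 0)
    simp only [hφdef]
    linarith
  have hub : ∀ t ∈ Ioi (0:ℝ),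
      (P {ω | t < g ω}).toReal ≤ Set.indicator (Ioc 0 K) (fun _ => (1:ℝ)) t + φ t := by
    intro t ht
    have ht0 : (0:ℝ) < t := ht
    rcases le_or_gt t K with htK | htK
    · have h1 : (P {ω | t < g ω}).toReal ≤ 1 := by
        calc (P {ω | t < g ω}).toReal ≤ (1 : ENNReal).toReal :=
              ENNReal.toReal_mono ENNReal.one_ne_top prob_le_one
          _ = 1 := ENNReal.toReal_one
      have h2 : Set.indicator (Ioc 0 K) (fun _ => (1:ℝ)) t = 1 :=
        Set.indicator_of_mem (Set.mem_Ioc.mpr ⟨ht0, htK⟩) _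
      rw [h2]
      linarith [hφ0 t ht0]
    · -- t > K
      have hset : {ω | t < g ω} = {ω | W ω ≤ t / c}ᶜ := by
        ext ω
        simp only [Set.mem_setOf_eq, Set.mem_compl_iff, not_le]
        rw [hgeq ω]
        constructor
        · intro h'
          rcases lt_max_iff.mp h' with h'' | h''
          · exact absurd h'' (not_lt.mpr htK.le)
          · rwa [div_lt_iff₀ hcpos, mul_comm]
        · intro h'
          refine lt_max_iff.mpr (Or.inr ?_)
          rwa [div_lt_iff₀ hcpos, mul_comm] at h'
      have hnm : NullMeasurableSet {ω | t < g ω} P :=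
        (hgi.aemeasurable.nullMeasurable measurableSet_Ioi :
          NullMeasurableSet (g ⁻¹' Ioi t) P)
      have hnm2 : NullMeasurableSet {ω | W ω ≤ t / c} P := by
        have := hnm.compl
        rwa [hset, compl_compl] at this
      have htc : 0 < t / c := div_pos ht0 hcpos
      have harg : Cf / (t / c) = M / t := by
        rw [hMdef]; field_simp
      have hexp1 : Real.exp (-(Cf / (t / c)) ^ (1/γ)) ≤ 1 :=
        Real.exp_le_one_iff.mpr (by
          have : (0:ℝ) ≤ (Cf / (t / c)) ^ (1/γ) :=
            Real.rpow_nonneg (div_pos hCfpos htc).le _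
          linarith)
      have h1 : P {ω | t < g ω}
          = 1 - ENNReal.ofReal (Real.exp (-(Cf / (t / c)) ^ (1/γ))) := by
        rw [hset, prob_compl_eq_one_sub₀ hnm2, hZdist (t / c) htc]
      rw [h1, ENNReal.toReal_sub_of_le (by
            rw [← ENNReal.ofReal_one]
            exact ENNReal.ofReal_le_ofReal hexp1) ENNReal.one_ne_top,
        ENNReal.toReal_one, ENNReal.toReal_ofReal (Real.exp_pos _).le, harg]
      have h2 : Set.indicator (Ioc 0 K) (fun _ => (1:ℝ)) t = 0 :=
        Set.indicator_of_notMem (fun hmem => absurd hmem.2 (not_le.mpr htK)) _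
      rw [h2, zero_add]
  have hφint : IntegrableOn φ (Ioi 0) := phi_integrable hγ0 hγ1 hMpos
  have hindint : Integrable (Set.indicator (Ioc 0 K) (fun _ => (1:ℝ)))
      (volume.restrict (Ioi 0)) := by
    rw [integrable_indicator_iff measurableSet_Ioc]
    refine integrableOn_const (C := (1:ℝ)) ?_
    exact (lt_of_le_of_lt (Measure.restrict_apply_le _ _) measure_Ioc_lt_top).ne
  have hupint : Integrable (fun t => Set.indicator (Ioc 0 K) (fun _ => (1:ℝ)) t + φ t)
      (volume.restrict (Ioi 0)) := hindint.add hφint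
  have hmono : ∫ t in Ioi (0:ℝ), (P {ω | t < g ω}).toReal
      ≤ ∫ t in Ioi (0:ℝ), (Set.indicator (Ioc 0 K) (fun _ => (1:ℝ)) t + φ t) := by
    apply integral_mono_of_nonneg
    · exact Eventually.of_forall fun t => ENNReal.toReal_nonneg
    · exact hupint
    · exact (ae_restrict_mem measurableSet_Ioi).mono fun t ht => hub t ht
  have hsum : ∫ t in Ioi (0:ℝ), (Set.indicator (Ioc 0 K) (fun _ => (1:ℝ)) t + φ t)
      = K + M * Real.Gamma (1 - γ) := by
    rw [integral_add hindint hφint]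
    congr 1
    · rw [integral_indicator measurableSet_Ioc, Measure.restrict_restrict measurableSet_Ioc,
        Set.inter_eq_self_of_subset_left Ioc_subset_Ioi_self, setIntegral_const,
        Real.volume_real_Ioc, smul_eq_mul, mul_one, max_eq_left (by linarith [hKpos])]
      ring
    · exact phi_integral hγ0 hγ1 hMpos
  rw [← hsum]
  exact hmono
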